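/- (Characterization of the zeros of the cost function V.) Assume σ > 1, a > 0 and σe^{−a} > 1; write F(r) = e^{−a}·σr/((σ−1)r+1) and ρ* = (σe^{−a}−1)/(σ−1). Then for s, t ∈ [0,1], V(s,t) = 0 if and only if one of the following holds: (i) s = t = 0; (ii) t = F^l(s) for some integer l ≥ 1 (F^l the l-th iterate of F); (iii) s ≠ 0 and t = ρ*. -/

import Mathlib

open ENNReal

/-- The selection map `f(r) = σr/((σ−1)r+1)`. -/
noncomputable def fsel (σ r : ℝ) : ℝ := σ * r / ((σ - 1) * r + 1)

/-- The map `F(r) = e^{−a}·f(r)`. -/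
noncomputable def Fmap (σ a r : ℝ) : ℝ := Real.exp (-a) * fsel σ r

/-- The binomial large deviation rate function `I(p,t)`, with value `+∞` for
`t ∉ [0,1]`, and with the degenerate conventions at `p = 0` and `p = 1`. -/
noncomputable def Irate (p t : ℝ) : ℝ≥0∞ :=
  if 0 ≤ t ∧ t ≤ 1 then
    if 0 < p ∧ p < 1 then
      ENNReal.ofReal (t * Real.log (t / p) + (1 - t) * Real.log ((1 - t) / (1 - p)))
    else if p ≤ 0 then (if t = 0 then 0 else ⊤)
    else (if t = 1 then 0 else ⊤)
  else ⊤

/-- The one-step cost `ℐ(r,s,t) = I(f(r),s) + s·I(e^{−a}, t/s)`, with the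
conventions `s·I(e^{−a},t/s) = 0` if `s = t = 0` and `= +∞` if `s = 0 < t`. -/
noncomputable def Icost (σ a r s t : ℝ) : ℝ≥0∞ :=
  Irate (fsel σ r) s +
    (if s = 0 then (if t = 0 then 0 else ⊤)
     else ENNReal.ofReal s * Irate (Real.exp (-a)) (t / s))

/-- The cost function `V(s,t)`: the infimum over `l ≥ 1` and paths
`ρ_0 = s, …, ρ_l = t`, `γ_0,…,γ_{l−1}` in `[0,1]` of `Σ_k ℐ(ρ_k,γ_k,ρ_{k+1})`. -/
noncomputable def Vcost (σ a : ℝ) (s t : ℝ) : ℝ≥0∞ :=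
  ⨅ (l : ℕ) (_ : 1 ≤ l) (ρ : ℕ → ℝ) (γ : ℕ → ℝ)
    (_ : ρ 0 = s) (_ : ρ l = t)
    (_ : ∀ k ≤ l, ρ k ∈ Set.Icc (0 : ℝ) 1) (_ : ∀ k < l, γ k ∈ Set.Icc (0 : ℝ) 1),
    ∑ k ∈ Finset.range l, Icost σ a (ρ k) (γ k) (ρ (k + 1))


set_option linter.unusedSectionVars false

noncomputable def rhostar (σ a : ℝ) : ℝ := (σ * Real.exp (-a) - 1) / (σ - 1)


section basic
variable {σ a : ℝ} (hσ : 1 < σ) (ha : 0 < a) (hcrit : 1 < σ * Real.exp (-a))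
include hσ

lemma den_pos {r : ℝ} (hr : 0 ≤ r) : 0 < (σ - 1) * r + 1 := by nlinarith

lemma fsel_nonneg {r : ℝ} (hr : 0 ≤ r) : 0 ≤ fsel σ r :=
  div_nonneg (by nlinarith) (den_pos hσ hr).le

lemma fsel_le_one {r : ℝ} (hr : 0 ≤ r) (hr1 : r ≤ 1) : fsel σ r ≤ 1 := by
  unfold fsel
  rw [div_le_one (den_pos hσ hr)]; nlinarith

lemma fsel_pos {r : ℝ} (hr : 0 < r) : 0 < fsel σ r :=
  div_pos (by nlinarith) (den_pos hσ hr.le)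

lemma fsel_sub {r r' : ℝ} (hr : 0 ≤ r) (hr' : 0 ≤ r') :
    fsel σ r - fsel σ r' = σ * (r - r') / (((σ - 1) * r + 1) * ((σ - 1) * r' + 1)) := by
  have d1 := (den_pos hσ hr).ne'
  have d2 := (den_pos hσ hr').ne'
  unfold fsel
  rw [div_sub_div _ _ d1 d2]
  ring

lemma fsel_mono {r r' : ℝ} (hr : 0 ≤ r) (hrr : r ≤ r') : fsel σ r ≤ fsel σ r' := by
  have h := fsel_sub hσ hr (hr.trans hrr)
  have d1 := den_pos hσ hr
  have d2 := den_pos hσ (hr.trans hrr)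
  nlinarith [div_nonpos_of_nonpos_of_nonneg (by nlinarith : σ * (r - r') ≤ 0)
    (by positivity : (0:ℝ) ≤ ((σ - 1) * r + 1) * ((σ - 1) * r' + 1))]

lemma fsel_lip {r r' : ℝ} (hr : 0 ≤ r) (hr' : 0 ≤ r') :
    |fsel σ r - fsel σ r'| ≤ σ * |r - r'| := by
  have d1 := den_pos hσ hr
  have d2 := den_pos hσ hr'
  rw [fsel_sub hσ hr hr', abs_div, abs_mul, abs_of_pos (by linarith : (0:ℝ) < σ),
    abs_of_pos (by positivity : (0:ℝ) < ((σ - 1) * r + 1) * ((σ - 1) * r' + 1))]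
  have h1 : (0:ℝ) ≤ ((σ - 1) * r) * ((σ - 1) * r') :=
    mul_nonneg (mul_nonneg (by linarith) hr) (mul_nonneg (by linarith) hr')
  exact div_le_self (by positivity) (by nlinarith)

end basic

section dyn
variable {σ a : ℝ} (hσ : 1 < σ) (ha : 0 < a) (hcrit : 1 < σ * Real.exp (-a))

lemma expa_pos : 0 < Real.exp (-a) := Real.exp_pos _

include ha in
lemma expa_lt_one : Real.exp (-a) < 1 := Real.exp_lt_one_iff.mpr (by linarith)

include hσ hcrit in
lemma exp_lt_sigma : Real.exp a < σ := by
  have h := Real.exp_pos (-a)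
  have : Real.exp a * Real.exp (-a) = 1 := by
    rw [← Real.exp_add]; simp
  nlinarith

include hσ in
lemma Fmap_nonneg {r : ℝ} (hr : 0 ≤ r) : 0 ≤ Fmap σ a r :=
  mul_nonneg (Real.exp_pos _).le (fsel_nonneg hσ hr)

include hσ in
lemma Fmap_pos {r : ℝ} (hr : 0 < r) : 0 < Fmap σ a r :=
  mul_pos (Real.exp_pos _) (fsel_pos hσ hr)

include hσ ha in
lemma Fmap_le_one {r : ℝ} (hr : 0 ≤ r) (hr1 : r ≤ 1) : Fmap σ a r ≤ 1 := by
  have := fsel_le_one hσ hr hr1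
  have := fsel_nonneg hσ hr
  have h2 := expa_lt_one (a := a) ha
  have h3 := Real.exp_pos (-a)
  unfold Fmap; nlinarith

include hσ in
lemma Fmap_mono {r r' : ℝ} (hr : 0 ≤ r) (hrr : r ≤ r') : Fmap σ a r ≤ Fmap σ a r' :=
  mul_le_mul_of_nonneg_left (fsel_mono hσ hr hrr) (Real.exp_pos _).le

include hσ hcrit in
lemma rhostar_pos : 0 < rhostar σ a :=
  div_pos (by linarith) (by linarith)

include hσ ha in
lemma rhostar_lt_one : rhostar σ a < 1 := by
  have h2 := expa_lt_one (a := a) ha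
  rw [rhostar, div_lt_one (by linarith)]; nlinarith

include hσ in
lemma Fmap_sub_self {x : ℝ} (hx : 0 ≤ x) :
    Fmap σ a x - x = x * (σ - 1) * (rhostar σ a - x) / ((σ - 1) * x + 1) := by
  have d := (den_pos hσ hx).ne'
  have hσ1 : σ - 1 ≠ 0 := by linarith
  rw [Fmap, fsel, rhostar]
  rw [eq_div_iff d, sub_mul, mul_div_assoc', div_mul_cancel₀ _ d]
  field_simp
  ring

include hσ hcrit in
lemma Fmap_gt_self {x : ℝ} (hx : 0 < x) (hxρ : x < rhostar σ a) : x < Fmap σ a x := by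
  have h := Fmap_sub_self (a := a) hσ hx.le
  have d := den_pos hσ hx.le
  nlinarith [div_pos (mul_pos (mul_pos hx (by linarith : (0:ℝ) < σ - 1)) (by linarith : 0 < rhostar σ a - x)) d]

include hσ hcrit in
lemma Fmap_fixed : Fmap σ a (rhostar σ a) = rhostar σ a := by
  have h := Fmap_sub_self (a := a) hσ (rhostar_pos hσ hcrit).le
  simp at h; linarith

include hσ in
lemma one_div_Fmap {x : ℝ} (hx : 0 < x) :
    1 / Fmap σ a x = Real.exp a / σ * (1 / x) + Real.exp a * (σ - 1) / σ := by
  have d := (den_pos hσ hx.le).ne'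
  have he : Real.exp (-a) = (Real.exp a)⁻¹ := Real.exp_neg a
  have hea := (Real.exp_pos a).ne'
  rw [Fmap, fsel, he]
  field_simp
  ring

include hσ in
lemma one_div_Fmap_sub {x y : ℝ} (hx : 0 < x) (hy : 0 < y) :
    1 / Fmap σ a x - 1 / Fmap σ a y = Real.exp a / σ * (1 / x - 1 / y) := by
  rw [one_div_Fmap hσ hx, one_div_Fmap hσ hy]; ring

include hσ hcrit in
lemma one_div_Fmap_sub_rho {x : ℝ} (hx : 0 < x) :
    1 / Fmap σ a x - 1 / rhostar σ a = Real.exp a / σ * (1 / x - 1 / rhostar σ a) := by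
  have h := one_div_Fmap_sub (a := a) hσ hx (rhostar_pos hσ hcrit)
  rwa [Fmap_fixed hσ hcrit] at h

include hσ ha in
lemma iter_mem {s : ℝ} (hs : 0 < s) (hs1 : s ≤ 1) (n : ℕ) :
    0 < (Fmap σ a)^[n] s ∧ (Fmap σ a)^[n] s ≤ 1 := by
  induction n with
  | zero => exact ⟨hs, hs1⟩
  | succ n ih =>
    rw [Function.iterate_succ_apply']
    exact ⟨Fmap_pos hσ ih.1, Fmap_le_one hσ ha ih.1.le ih.2⟩

include hσ ha hcrit in
lemma iter_formula {s : ℝ} (hs : 0 < s) (hs1 : s ≤ 1) (n : ℕ) :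
    1 / (Fmap σ a)^[n] s - 1 / rhostar σ a =
      (Real.exp a / σ) ^ n * (1 / s - 1 / rhostar σ a) := by
  induction n with
  | zero => simp
  | succ n ih =>
    rw [Function.iterate_succ_apply',
      one_div_Fmap_sub_rho hσ hcrit (iter_mem hσ ha hs hs1 n).1, ih, pow_succ]
    ring

end dyn


lemma log_le_two_sqrt {x : ℝ} (hx : 0 < x) : Real.log x ≤ 2 * (Real.sqrt x - 1) := by
  have h1 : Real.log (Real.sqrt x) ≤ Real.sqrt x - 1 :=
    Real.log_le_sub_one_of_pos (Real.sqrt_pos.mpr hx)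
  have h2 : Real.log (Real.sqrt x) = Real.log x / 2 := Real.log_sqrt hx.le
  linarith

lemma kl_step {p t : ℝ} (hp : 0 < p) (ht : 0 ≤ t) :
    2 * (t - Real.sqrt (t * p)) ≤ t * Real.log (t / p) := by
  rcases eq_or_lt_of_le ht with h | h
  · simp [← h]
  · have key : Real.log (t / p) = - Real.log (p / t) := by
      rw [Real.log_div h.ne' hp.ne', Real.log_div hp.ne' h.ne']; ring
    have h2 : Real.log (p / t) ≤ 2 * (Real.sqrt (p / t) - 1) :=
      log_le_two_sqrt (div_pos hp h)
    have h3 : t * Real.sqrt (p / t) = Real.sqrt (t * p) := by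
      rw [show t * p = t ^ 2 * (p / t) by field_simp, Real.sqrt_mul (by positivity),
        Real.sqrt_sq ht]
    nlinarith
  
lemma kl_ge {p t : ℝ} (hp : 0 < p) (hp1 : p < 1) (ht : 0 ≤ t) (ht1 : t ≤ 1) :
    (t - p) ^ 2 / 4 ≤ t * Real.log (t / p) + (1 - t) * Real.log ((1 - t) / (1 - p)) := by
  set A := Real.sqrt t
  set B := Real.sqrt p
  set C := Real.sqrt (1 - t)
  set D := Real.sqrt (1 - p)
  have h1 := kl_step hp ht
  have h2 := kl_step (by linarith : 0 < 1 - p) (by linarith : 0 ≤ 1 - t)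
  have hA : A ^ 2 = t := Real.sq_sqrt ht
  have hB : B ^ 2 = p := Real.sq_sqrt hp.le
  have hC : C ^ 2 = 1 - t := Real.sq_sqrt (by linarith)
  have hD : D ^ 2 = 1 - p := Real.sq_sqrt (by linarith)
  have hAB : Real.sqrt (t * p) = A * B := Real.sqrt_mul ht p
  have hCD : Real.sqrt ((1 - t) * (1 - p)) = C * D := Real.sqrt_mul (by linarith) _
  have hA1 : A ≤ 1 := by rw [show (1:ℝ) = Real.sqrt 1 by simp]; exact Real.sqrt_le_sqrt ht1
  have hB1 : B ≤ 1 := by rw [show (1:ℝ) = Real.sqrt 1 by simp]; exact Real.sqrt_le_sqrt hp1.le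
  have hA0 : 0 ≤ A := Real.sqrt_nonneg t
  have hB0 : 0 ≤ B := Real.sqrt_nonneg p
  have e1 : 2 * (t - A * B) + 2 * ((1 - t) - C * D) = (A - B) ^ 2 + (C - D) ^ 2 := by
    nlinarith [hA, hB, hC, hD]
  have e2 : (t - p) ^ 2 ≤ 4 * (A - B) ^ 2 := by
    have : t - p = (A - B) * (A + B) := by nlinarith
    rw [this]
    nlinarith [sq_nonneg (A - B)]
  rw [hAB] at h1
  rw [hCD] at h2
  nlinarith [sq_nonneg (C - D)]

lemma kl_le {p t : ℝ} (hp : 0 < p) (hp1 : p < 1) (ht : 0 ≤ t) (ht1 : t ≤ 1) :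
    t * Real.log (t / p) + (1 - t) * Real.log ((1 - t) / (1 - p)) ≤ (t - p) ^ 2 / (p * (1 - p)) := by
  have h1 : t * Real.log (t / p) ≤ t * ((t - p) / p) := by
    rcases eq_or_lt_of_le ht with h | h
    · simp [← h]
    · have := Real.log_le_sub_one_of_pos (div_pos h hp)
      have e : t / p - 1 = (t - p) / p := by field_simp
      nlinarith
  have h2 : (1 - t) * Real.log ((1 - t) / (1 - p)) ≤ (1 - t) * ((p - t) / (1 - p)) := by
    rcases eq_or_lt_of_le ht1 with h | h
    · rw [h]; norm_num
    · have := Real.log_le_sub_one_of_pos (div_pos (by linarith : (0:ℝ) < 1 - t) (by linarith : (0:ℝ) < 1 - p))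
      have hh2 : (1:ℝ) - p ≠ 0 := by linarith
      have e : (1 - t) / (1 - p) - 1 = (p - t) / (1 - p) := by
        rw [div_sub' hh2]; ring_nf
      nlinarith
  have e3 : t * ((t - p) / p) + (1 - t) * ((p - t) / (1 - p)) = (t - p) ^ 2 / (p * (1 - p)) := by
    have hh1 : p ≠ 0 := hp.ne'
    have hh2 : (1:ℝ) - p ≠ 0 := by linarith
    field_simp
    ring
  linarith

lemma Irate_ge {p : ℝ} (hp0 : 0 ≤ p) (hp1 : p ≤ 1) (t : ℝ) :
    ENNReal.ofReal ((t - p) ^ 2 / 4) ≤ Irate p t := by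
  unfold Irate
  by_cases ht : 0 ≤ t ∧ t ≤ 1
  · rw [if_pos ht]
    by_cases hp : 0 < p ∧ p < 1
    · rw [if_pos hp]
      exact ENNReal.ofReal_le_ofReal (kl_ge hp.1 hp.2 ht.1 ht.2)
    · rw [if_neg hp]
      rcases (not_and_or.mp hp) with h | h
      · have hpz : p = 0 := le_antisymm (not_lt.mp h) hp0
        rw [if_pos (by linarith)]
        by_cases htz : t = 0
        · simp [htz, hpz]
        · simp [htz]
      · have hpz : p = 1 := le_antisymm hp1 (not_lt.mp h)
        rw [if_neg (by linarith)]
        by_cases htz : t = 1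
        · simp [htz, hpz]
        · simp [htz]
  · rw [if_neg ht]; exact le_top

lemma Irate_le {p t : ℝ} (hp : 0 < p) (hp1 : p < 1) (ht : 0 ≤ t) (ht1 : t ≤ 1) :
    Irate p t ≤ ENNReal.ofReal ((t - p) ^ 2 / (p * (1 - p))) := by
  unfold Irate
  rw [if_pos ⟨ht, ht1⟩, if_pos ⟨hp, hp1⟩]
  exact ENNReal.ofReal_le_ofReal (kl_le hp hp1 ht ht1)

lemma Irate_self {p : ℝ} (hp0 : 0 ≤ p) (hp1 : p ≤ 1) : Irate p p = 0 := by
  unfold Irate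
  rw [if_pos ⟨hp0, hp1⟩]
  by_cases hp : 0 < p ∧ p < 1
  · rw [if_pos hp, div_self hp.1.ne', div_self (by linarith : (1:ℝ) - p ≠ 0)]
    simp
  · rw [if_neg hp]
    rcases (not_and_or.mp hp) with h | h
    · have : p = 0 := le_antisymm (not_lt.mp h) hp0
      simp [this]
    · have : p = 1 := le_antisymm hp1 (not_lt.mp h)
      simp [this]

section icost
variable {σ a : ℝ} (hσ : 1 < σ) (ha : 0 < a) (hcrit : 1 < σ * Real.exp (-a))

include hσ ha in
lemma Icost_step_ge {r γ ρ' : ℝ} (hr0 : 0 ≤ r) (hr1 : r ≤ 1) (hγ0 : 0 ≤ γ) (hγ1 : γ ≤ 1) :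
    ENNReal.ofReal ((ρ' - Fmap σ a r) ^ 2 / 8) ≤ Icost σ a r γ ρ' := by
  set E := Real.exp (-a) with hE
  have hE0 : 0 < E := Real.exp_pos _
  have hE1 : E < 1 := expa_lt_one ha
  set p := fsel σ r with hp
  have hp0 : 0 ≤ p := fsel_nonneg hσ hr0
  have hp1 : p ≤ 1 := fsel_le_one hσ hr0 hr1
  have hF : Fmap σ a r = E * p := rfl
  rw [Icost]
  by_cases hγ : γ = 0
  · subst hγ
    by_cases hρ : ρ' = 0
    · subst hρ
      rw [if_pos rfl, if_pos rfl, add_zero]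
      refine le_trans (ENNReal.ofReal_le_ofReal ?_) (Irate_ge hp0 hp1 0)
      rw [hF]
      have k : 0 ≤ (1 - E ^ 2) * p ^ 2 := mul_nonneg (by nlinarith) (sq_nonneg _)
      nlinarith [sq_nonneg p]
    · rw [if_pos rfl, if_neg hρ, add_top]
      exact le_top
  · rw [if_neg hγ]
    have hγpos : 0 < γ := lt_of_le_of_ne hγ0 (Ne.symm hγ)
    have hB : ENNReal.ofReal ((ρ' - E * γ) ^ 2 / 4) ≤
        ENNReal.ofReal γ * Irate E (ρ' / γ) := by
      refine le_trans ?_ (mul_le_mul_right (Irate_ge hE0.le hE1.le (ρ' / γ)) _)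
      rw [← ENNReal.ofReal_mul hγ0]
      apply ENNReal.ofReal_le_ofReal
      have e1 : γ * ((ρ' / γ - E) ^ 2 / 4) = (ρ' - E * γ) ^ 2 / (4 * γ) := by
        field_simp
      rw [e1]
      apply div_le_div_of_nonneg_left (sq_nonneg _) (by linarith)
      nlinarith
  
    refine le_trans ?_ (add_le_add (Irate_ge hp0 hp1 γ) hB)
    rw [← ENNReal.ofReal_add (by positivity) (by positivity)]
    apply ENNReal.ofReal_le_ofReal
    rw [hF]
    have key : (1 - E ^ 2) * (γ - p) ^ 2 ≥ 0 :=
      mul_nonneg (by nlinarith) (sq_nonneg _)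
    nlinarith [sq_nonneg ((ρ' - E * γ) - E * (γ - p))]

include hσ ha in
lemma Icost_self {r : ℝ} (hr0 : 0 ≤ r) (hr1 : r ≤ 1) :
    Icost σ a r (fsel σ r) (Fmap σ a r) = 0 := by
  set E := Real.exp (-a) with hE
  have hE0 : 0 < E := Real.exp_pos _
  have hE1 : E < 1 := expa_lt_one ha
  set p := fsel σ r with hp
  have hp0 : 0 ≤ p := fsel_nonneg hσ hr0
  have hp1 : p ≤ 1 := fsel_le_one hσ hr0 hr1
  have hF : Fmap σ a r = E * p := rfl
  rw [Icost, ← hp, ← hE, Irate_self hp0 hp1, zero_add]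
  by_cases hpz : p = 0
  · rw [if_pos hpz, if_pos (by rw [hF, hpz, mul_zero])]
  · rw [if_neg hpz, hF, mul_div_assoc, div_self hpz, mul_one,
      Irate_self hE0.le hE1.le, mul_zero]

include hσ in
lemma Icost_zero_start {γ ρ' : ℝ} (h : Icost σ a 0 γ ρ' ≠ ⊤) : ρ' = 0 := by
  have hf : fsel σ 0 = 0 := by simp [fsel]
  rw [Icost, hf] at h
  have hγ : γ = 0 := by
    by_contra hγ
    apply h
    have : Irate 0 γ = ⊤ := by
      rw [Irate]
      by_cases h01 : 0 ≤ γ ∧ γ ≤ 1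
      · rw [if_pos h01, if_neg (by simp), if_pos le_rfl, if_neg hγ]
      · rw [if_neg h01]
    rw [this, top_add]
  subst hγ
  by_contra hρ
  rw [if_pos rfl, if_neg hρ, add_top] at h
  exact h rfl

end icost

section vcost
variable {σ a : ℝ} (hσ : 1 < σ) (ha : 0 < a) (hcrit : 1 < σ * Real.exp (-a))

lemma Vcost_le_path (s t : ℝ) {l : ℕ} (hl : 1 ≤ l) (ρ γ : ℕ → ℝ)
    (h0 : ρ 0 = s) (hL : ρ l = t) (hρ : ∀ k ≤ l, ρ k ∈ Set.Icc (0:ℝ) 1)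
    (hγ : ∀ k < l, γ k ∈ Set.Icc (0:ℝ) 1) :
    Vcost σ a s t ≤ ∑ k ∈ Finset.range l, Icost σ a (ρ k) (γ k) (ρ (k + 1)) := by
  rw [Vcost]
  refine iInf_le_of_le l (iInf_le_of_le hl (iInf_le_of_le ρ (iInf_le_of_le γ
    (iInf_le_of_le h0 (iInf_le_of_le hL (iInf_le_of_le hρ (iInf_le _ hγ)))))))

lemma exists_path_of_lt {s t : ℝ} {b : ℝ≥0∞} (h : Vcost σ a s t < b) :
    ∃ l, 1 ≤ l ∧ ∃ ρ γ : ℕ → ℝ, ρ 0 = s ∧ ρ l = t ∧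
      (∀ k ≤ l, ρ k ∈ Set.Icc (0:ℝ) 1) ∧ (∀ k < l, γ k ∈ Set.Icc (0:ℝ) 1) ∧
      ∑ k ∈ Finset.range l, Icost σ a (ρ k) (γ k) (ρ (k + 1)) < b := by
  simp only [Vcost, iInf_lt_iff] at h
  obtain ⟨l, hl, ρ, γ, h0, hL, hρ, hγ, hsum⟩ := h
  exact ⟨l, hl, ρ, γ, h0, hL, hρ, hγ, hsum⟩

include hσ ha in
lemma iter_mem0 {s : ℝ} (hs : 0 ≤ s) (hs1 : s ≤ 1) (n : ℕ) :
    0 ≤ (Fmap σ a)^[n] s ∧ (Fmap σ a)^[n] s ≤ 1 := by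
  induction n with
  | zero => exact ⟨hs, hs1⟩
  | succ n ih =>
    rw [Function.iterate_succ_apply']
    exact ⟨Fmap_nonneg hσ ih.1, Fmap_le_one hσ ha ih.1 ih.2⟩

include hσ ha in
lemma Vcost_iterate_zero {s : ℝ} (hs : 0 ≤ s) (hs1 : s ≤ 1) {l : ℕ} (hl : 1 ≤ l) :
    Vcost σ a s ((Fmap σ a)^[l] s) = 0 := by
  refine le_antisymm ?_ (zero_le)
  have h := Vcost_le_path (σ := σ) (a := a) s ((Fmap σ a)^[l] s) hl
    (fun k => (Fmap σ a)^[k] s) (fun k => fsel σ ((Fmap σ a)^[k] s))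
    (by simp) rfl
    (fun k _ => ⟨(iter_mem0 hσ ha hs hs1 k).1, (iter_mem0 hσ ha hs hs1 k).2⟩)
    (fun k _ => ⟨fsel_nonneg hσ (iter_mem0 hσ ha hs hs1 k).1,
      fsel_le_one hσ (iter_mem0 hσ ha hs hs1 k).1 (iter_mem0 hσ ha hs hs1 k).2⟩)
  refine le_trans h (le_of_eq (Finset.sum_eq_zero fun k _ => ?_))
  show Icost σ a ((Fmap σ a)^[k] s) (fsel σ ((Fmap σ a)^[k] s)) ((Fmap σ a)^[k + 1] s) = 0
  rw [Function.iterate_succ_apply']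
  exact Icost_self hσ ha (iter_mem0 hσ ha hs hs1 k).1 (iter_mem0 hσ ha hs hs1 k).2

include hσ in
lemma Vcost_zero_left_eq_zero {t : ℝ} (hV : Vcost σ a 0 t = 0) : t = 0 := by
  have h : Vcost σ a 0 t < 1 := by rw [hV]; exact zero_lt_one
  obtain ⟨l, hl, ρ, γ, h0, hL, hρ, hγ, hsum⟩ := exists_path_of_lt (σ := σ) (a := a) h
  have key : ∀ k ≤ l, ρ k = 0 := by
    intro k hk
    induction k with
    | zero => exact h0
    | succ k ih =>
      have hk' : k < l := Nat.lt_of_succ_le hk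
      have hik : Icost σ a (ρ k) (γ k) (ρ (k + 1)) ≠ ⊤ := by
        have hle : Icost σ a (ρ k) (γ k) (ρ (k + 1)) ≤
            ∑ j ∈ Finset.range l, Icost σ a (ρ j) (γ j) (ρ (j + 1)) :=
          Finset.single_le_sum (f := fun j => Icost σ a (ρ j) (γ j) (ρ (j + 1)))
            (fun j _ => zero_le) (Finset.mem_range.mpr hk')
        exact ne_top_of_lt (lt_of_le_of_lt hle (lt_of_lt_of_le hsum le_top)).lt_top
      rw [ih (le_of_lt hk')] at hik
      exact Icost_zero_start hσ hik
  rw [← hL]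
  exact key l le_rfl

include hσ in
lemma fsel_lt_one {r : ℝ} (hr0 : 0 ≤ r) (hr : r < 1) : fsel σ r < 1 := by
  rw [fsel, div_lt_one (den_pos hσ hr0)]; nlinarith

lemma exp_mul_exp_neg : Real.exp a * Real.exp (-a) = 1 := by
  rw [← Real.exp_add]; simp

include hσ hcrit in
lemma fsel_rhostar : fsel σ (rhostar σ a) = Real.exp a * rhostar σ a := by
  have h : Real.exp (-a) * fsel σ (rhostar σ a) = rhostar σ a := Fmap_fixed hσ hcrit
  calc fsel σ (rhostar σ a)
      = Real.exp a * (Real.exp (-a) * fsel σ (rhostar σ a)) := by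
        rw [← mul_assoc, exp_mul_exp_neg, one_mul]
    _ = Real.exp a * rhostar σ a := by rw [h]

include hσ hcrit in
lemma gstar_pos : 0 < Real.exp a * rhostar σ a :=
  mul_pos (Real.exp_pos a) (rhostar_pos hσ hcrit)

include hσ ha in
lemma gstar_lt_one : Real.exp a * rhostar σ a < 1 := by
  have h1 : 1 < Real.exp a := by rw [show (1:ℝ) = Real.exp 0 by simp]; exact Real.exp_lt_exp.mpr ha
  have he := exp_mul_exp_neg (a := a)
  have key : Real.exp a * (σ * Real.exp (-a) - 1) = σ - Real.exp a := by
    rw [mul_sub, mul_one, show Real.exp a * (σ * Real.exp (-a)) = σ by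
      rw [mul_comm σ _, ← mul_assoc, he, one_mul]]
  rw [rhostar, mul_div_assoc' , key, div_lt_one (by linarith)]
  linarith

include hσ ha hcrit in
lemma iter_dist {s : ℝ} (hs : 0 < s) (hs1 : s ≤ 1) (n : ℕ) :
    |(Fmap σ a)^[n] s - rhostar σ a| ≤
      (Real.exp a / σ) ^ n * |1 / s - 1 / rhostar σ a| := by
  set u := (Fmap σ a)^[n] s with hu
  have hu0 : 0 < u := (iter_mem hσ ha hs hs1 n).1
  have hu1 : u ≤ 1 := (iter_mem hσ ha hs hs1 n).2
  have hρ0 : 0 < rhostar σ a := rhostar_pos hσ hcrit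
  have hρ1 : rhostar σ a ≤ 1 := (rhostar_lt_one hσ ha).le
  have hf := iter_formula hσ ha hcrit hs hs1 n
  have e1 : u - rhostar σ a = u * rhostar σ a * (1 / rhostar σ a - 1 / u) := by
    field_simp
  have e2 : |u - rhostar σ a| = u * rhostar σ a * |1 / u - 1 / rhostar σ a| := by
    rw [e1, abs_mul, abs_of_pos (mul_pos hu0 hρ0), abs_sub_comm]
  rw [e2, show |1 / u - 1 / rhostar σ a| = |1 / (Fmap σ a)^[n] s - 1 / rhostar σ a| from by rw [← hu], hf, abs_mul, abs_pow, abs_of_pos (by positivity : (0:ℝ) < Real.exp a / σ)]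
  have h1 : u * rhostar σ a ≤ 1 := by nlinarith
  exact mul_le_of_le_one_left
    (mul_nonneg (pow_nonneg (by positivity) n) (abs_nonneg _)) h1

include hσ ha in
lemma Fmap_lt_one {r : ℝ} (hr0 : 0 ≤ r) (hr1 : r ≤ 1) : Fmap σ a r < 1 := by
  have h1 : Fmap σ a r ≤ Real.exp (-a) := by
    rw [Fmap]
    nlinarith [fsel_le_one hσ hr0 hr1, Real.exp_pos (-a), fsel_nonneg hσ hr0]
  exact lt_of_le_of_lt h1 (expa_lt_one ha)

include hσ ha hcrit in
lemma Vcost_rho_zero {s : ℝ} (hs : 0 < s) (hs1 : s ≤ 1) :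
    Vcost σ a s (rhostar σ a) = 0 := by
  have hρ0 : 0 < rhostar σ a := rhostar_pos hσ hcrit
  have hρ1 : rhostar σ a < 1 := rhostar_lt_one hσ ha
  set g := Real.exp a * rhostar σ a with hg
  have hg0 : 0 < g := gstar_pos hσ hcrit
  have hg1 : g < 1 := gstar_lt_one hσ ha
  set c := Real.exp a / σ with hcdef
  have hc0 : 0 < c := div_pos (Real.exp_pos a) (by linarith)
  have hc1 : c < 1 := by
    rw [hcdef, div_lt_one (by linarith)]
    exact exp_lt_sigma hσ hcrit
  set K := |1 / s - 1 / rhostar σ a| with hK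
  refine le_antisymm ?_ (zero_le)
  refine ENNReal.le_of_forall_pos_le_add fun ε hε _ => ?_
  rw [zero_add]
  have hεr : 0 < (ε : ℝ) := hε
  set w := min g (1 - g) / 2 with hw
  have hming : 0 < min g (1 - g) := lt_min hg0 (by linarith)
  have hw0 : 0 < w := by rw [hw]; linarith
  have hwg : w ≤ g / 2 := by
    rw [hw]; have := min_le_left g (1 - g); linarith
  have hwg1 : w ≤ (1 - g) / 2 := by
    rw [hw]; have := min_le_right g (1 - g); linarith
  set X := (ε : ℝ) * (g / 2 * ((1 - g) / 2)) with hX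
  have hX0 : 0 < X := by
    rw [hX]
    exact mul_pos hεr (mul_pos (by linarith) (by linarith))
  set T := min w (Real.sqrt X) with hT
  have hT0 : 0 < T := lt_min hw0 (Real.sqrt_pos.mpr hX0)
  have htend : Filter.Tendsto (fun n : ℕ => c ^ n * K) Filter.atTop (nhds 0) := by
    simpa using (tendsto_pow_atTop_nhds_zero_of_lt_one hc0.le hc1).mul_const K
  have hev := htend.eventually (gt_mem_nhds (show 0 < T / σ by positivity))
  obtain ⟨n, hn1, hnT⟩ := ((Filter.eventually_ge_atTop 1).and hev).exists
  set u := (Fmap σ a)^[n] s with hu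
  have hu0 : 0 < u := (iter_mem hσ ha hs hs1 n).1
  have hu1 : u ≤ 1 := (iter_mem hσ ha hs hs1 n).2
  set p := fsel σ u with hp
  have hp0 : 0 < p := fsel_pos hσ hu0
  have hult : u < 1 := by
    obtain ⟨m, rfl⟩ := Nat.exists_eq_add_of_le hn1
    rw [hu, Function.iterate_add_apply]
    exact Fmap_lt_one hσ ha (iter_mem hσ ha hs hs1 m).1.le (iter_mem hσ ha hs hs1 m).2
  have hplt : p < 1 := fsel_lt_one hσ hu0.le hult
  have hdist : |u - rhostar σ a| ≤ c ^ n * K := iter_dist hσ ha hcrit hs hs1 n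
  have hpg : |p - g| ≤ σ * |u - rhostar σ a| := by
    rw [hg, ← fsel_rhostar hσ hcrit]
    exact fsel_lip hσ hu0.le hρ0.le
  clear_value g c K w X T u p
  have hpgT : |p - g| < T := by
    have h1 : σ * (c ^ n * K) < σ * (T / σ) :=
      mul_lt_mul_of_pos_left hnT (by linarith)
    have h2 : σ * (T / σ) = T := by field_simp
    nlinarith [abs_nonneg (u - rhostar σ a)]
  have habs := abs_lt.mp hpgT
  have hTw : T ≤ w := by rw [hT]; exact min_le_left _ _
  have hpge : g / 2 ≤ p := by linarith
  have h1pge : (1 - g) / 2 ≤ 1 - p := by linarith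
  have hsq : (g - p) ^ 2 ≤ X := by
    have h1 : T ≤ Real.sqrt X := by rw [hT]; exact min_le_right _ _
    have h2 : T ^ 2 ≤ X := by
      calc T ^ 2 ≤ Real.sqrt X ^ 2 := pow_le_pow_left₀ hT0.le h1 2
        _ = X := Real.sq_sqrt hX0.le
    have h3 : (g - p) ^ 2 ≤ T ^ 2 := by
      rw [show (g - p) ^ 2 = |p - g| ^ 2 by rw [sq_abs]; ring]
      exact pow_le_pow_left₀ (abs_nonneg _) hpgT.le 2
    linarith
  have hfrac : (g - p) ^ 2 / (p * (1 - p)) ≤ (ε : ℝ) := by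
    rw [div_le_iff₀ (mul_pos hp0 (by linarith))]
    have hmm : g / 2 * ((1 - g) / 2) ≤ p * (1 - p) :=
      mul_le_mul hpge h1pge (by linarith) hp0.le
    calc (g - p) ^ 2 ≤ X := hsq
      _ = (ε : ℝ) * (g / 2 * ((1 - g) / 2)) := hX
      _ ≤ (ε : ℝ) * (p * (1 - p)) := mul_le_mul_of_nonneg_left hmm hεr.le
  -- construct the path
  set ρf : ℕ → ℝ := fun k => if k ≤ n then (Fmap σ a)^[k] s else rhostar σ a with hρf
  set γf : ℕ → ℝ := fun k => if k < n then fsel σ ((Fmap σ a)^[k] s) else g with hγf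
  have h0 : ρf 0 = s := by simp [hρf]
  have hL : ρf (n + 1) = rhostar σ a := by simp [hρf]
  have hmem : ∀ k ≤ n + 1, ρf k ∈ Set.Icc (0:ℝ) 1 := by
    intro k _
    by_cases hk : k ≤ n
    · rw [hρf]; simp only [if_pos hk]
      exact ⟨(iter_mem hσ ha hs hs1 k).1.le, (iter_mem hσ ha hs hs1 k).2⟩
    · rw [hρf]; simp only [if_neg hk]
      exact ⟨hρ0.le, hρ1.le⟩
  have hγmem : ∀ k < n + 1, γf k ∈ Set.Icc (0:ℝ) 1 := by
    intro k _
    by_cases hk : k < n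
    · rw [hγf]; simp only [if_pos hk]
      exact ⟨fsel_nonneg hσ (iter_mem hσ ha hs hs1 k).1.le,
        fsel_le_one hσ (iter_mem hσ ha hs hs1 k).1.le (iter_mem hσ ha hs hs1 k).2⟩
    · rw [hγf]; simp only [if_neg hk]
      exact ⟨hg0.le, hg1.le⟩
  have hle := Vcost_le_path (σ := σ) (a := a) s (rhostar σ a)
    (Nat.succ_le_succ (Nat.zero_le n)) ρf γf h0 hL hmem hγmem
  have hsum : ∑ k ∈ Finset.range (n + 1), Icost σ a (ρf k) (γf k) (ρf (k + 1)) ≤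
      ENNReal.ofReal (ε : ℝ) := by
    rw [Finset.sum_range_succ]
    have hfirst : ∑ k ∈ Finset.range n, Icost σ a (ρf k) (γf k) (ρf (k + 1)) = 0 := by
      refine Finset.sum_eq_zero fun k hk => ?_
      have hkn : k < n := Finset.mem_range.mp hk
      have e1 : ρf k = (Fmap σ a)^[k] s := by rw [hρf]; simp only [if_pos hkn.le]
      have e2 : γf k = fsel σ ((Fmap σ a)^[k] s) := by rw [hγf]; simp only [if_pos hkn]
      have e3 : ρf (k + 1) = (Fmap σ a)^[k + 1] s := by
        rw [hρf]; simp only [if_pos (Nat.succ_le_of_lt hkn)]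
      rw [e1, e2, e3, Function.iterate_succ_apply']
      exact Icost_self hσ ha (iter_mem hσ ha hs hs1 k).1.le (iter_mem hσ ha hs hs1 k).2
    rw [hfirst, zero_add]
    have e1 : ρf n = u := by rw [hρf]; simp only [if_pos le_rfl]; rw [hu]
    have e2 : γf n = g := by rw [hγf]; simp only [if_neg (lt_irrefl n)]
    have e3 : ρf (n + 1) = rhostar σ a := hL
    rw [e1, e2, e3, Icost, if_neg hg0.ne']
    have hdiv : rhostar σ a / g = Real.exp (-a) := by
      rw [hg, Real.exp_neg]
      field_simp [hρ0.ne']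
    rw [hdiv, Irate_self (Real.exp_pos _).le (expa_lt_one ha).le, mul_zero, add_zero]
    calc Irate (fsel σ u) g ≤ ENNReal.ofReal ((g - p) ^ 2 / (p * (1 - p))) := by
          rw [← hp]; exact Irate_le hp0 hplt hg0.le hg1.le
      _ ≤ ENNReal.ofReal (ε : ℝ) := ENNReal.ofReal_le_ofReal hfrac
  calc Vcost σ a s (rhostar σ a) ≤ _ := hle
    _ ≤ ENNReal.ofReal (ε : ℝ) := hsum
    _ = (ε : ℝ≥0∞) := ENNReal.ofReal_coe_nnreal

lemma one_div_inj {x y : ℝ} (hx : 0 < x) (hy : 0 < y) (h : 1 / x = 1 / y) : x = y := by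
  field_simp at h
  linarith

include hσ ha hcrit in
lemma gap_pos {s t : ℝ} (hs : 0 < s) (hs1 : s ≤ 1) (ht : 0 < t)
    (hne1 : ∀ l, 1 ≤ l → t ≠ (Fmap σ a)^[l] s) (hne2 : t ≠ rhostar σ a) :
    ∃ δ > 0, ∀ n, 1 ≤ n → δ ≤ |1 / t - 1 / (Fmap σ a)^[n] s| := by
  have hρ0 := rhostar_pos hσ hcrit
  set c := Real.exp a / σ with hcdef
  have hc0 : 0 < c := div_pos (Real.exp_pos a) (by linarith)
  have hc1 : c < 1 := by
    rw [hcdef, div_lt_one (by linarith)]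
    exact exp_lt_sigma hσ hcrit
  set K := |1 / s - 1 / rhostar σ a| with hK
  set L := |1 / t - 1 / rhostar σ a| with hLdef
  have hL0 : 0 < L := by
    rw [hLdef, abs_pos, sub_ne_zero]
    exact fun h => hne2 (one_div_inj ht hρ0 h)
  have htend : Filter.Tendsto (fun n : ℕ => c ^ n * K) Filter.atTop (nhds 0) := by
    simpa using (tendsto_pow_atTop_nhds_zero_of_lt_one hc0.le hc1).mul_const K
  obtain ⟨N, hN⟩ := Filter.eventually_atTop.mp
    (htend.eventually (gt_mem_nhds (half_pos hL0)))
  set S := insert (L / 2)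
    ((Finset.range N).image (fun m => |1 / t - 1 / (Fmap σ a)^[m + 1] s|)) with hS
  have hSne : S.Nonempty := ⟨L / 2, Finset.mem_insert_self _ _⟩
  refine ⟨S.min' hSne, ?_, ?_⟩
  · have hmem := S.min'_mem hSne
    rcases Finset.mem_insert.mp hmem with h | h
    · rw [h]; exact half_pos hL0
    · obtain ⟨m, _, heq⟩ := Finset.mem_image.mp h
      rw [← heq, gt_iff_lt, abs_pos, sub_ne_zero]
      intro hcon
      exact hne1 (m + 1) (Nat.le_add_left 1 m)
        (one_div_inj ht (iter_mem hσ ha hs hs1 (m + 1)).1 hcon)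
  · intro n hn
    by_cases hnN : n < N
    · obtain ⟨m, rfl⟩ := Nat.exists_eq_add_of_le hn
      have hmN : m < N := by omega
      refine Finset.min'_le _ _ ?_
      refine Finset.mem_insert_of_mem (Finset.mem_image.mpr ⟨m, Finset.mem_range.mpr hmN, ?_⟩)
      rw [add_comm 1 m]
    · have h1 : c ^ n * K < L / 2 := hN n (le_of_not_gt hnN)
      have h2 : |1 / (Fmap σ a)^[n] s - 1 / rhostar σ a| = c ^ n * K := by
        rw [hK, iter_formula hσ ha hcrit hs hs1 n, abs_mul, abs_pow, abs_of_pos hc0]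
      have h3 : L ≤ |1 / t - 1 / (Fmap σ a)^[n] s| +
          |1 / (Fmap σ a)^[n] s - 1 / rhostar σ a| := by
        rw [hLdef]
        exact abs_sub_le _ _ _
      have h4 : S.min' hSne ≤ L / 2 := Finset.min'_le _ _ (Finset.mem_insert_self _ _)
      linarith [h2 ▸ h1, h3]

include hσ ha in
lemma step_est {l : ℕ} {ρ γ : ℕ → ℝ} {ε : ℝ} (hε : 0 < ε)
    (hρmem : ∀ k ≤ l, ρ k ∈ Set.Icc (0:ℝ) 1) (hγmem : ∀ k < l, γ k ∈ Set.Icc (0:ℝ) 1)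
    (hsum : ∑ k ∈ Finset.range l, Icost σ a (ρ k) (γ k) (ρ (k + 1)) <
      ENNReal.ofReal (ε ^ 2 / 8)) :
    ∀ k < l, |ρ (k + 1) - Fmap σ a (ρ k)| < ε := by
  intro k hk
  have h1 : Icost σ a (ρ k) (γ k) (ρ (k + 1)) ≤
      ∑ j ∈ Finset.range l, Icost σ a (ρ j) (γ j) (ρ (j + 1)) :=
    Finset.single_le_sum (f := fun j => Icost σ a (ρ j) (γ j) (ρ (j + 1)))
      (fun j _ => zero_le) (Finset.mem_range.mpr hk)
  have h2 := Icost_step_ge hσ ha (ρ' := ρ (k + 1)) (hρmem k hk.le).1 (hρmem k hk.le).2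
    (hγmem k hk).1 (hγmem k hk).2
  have h3 : ENNReal.ofReal ((ρ (k + 1) - Fmap σ a (ρ k)) ^ 2 / 8) <
      ENNReal.ofReal (ε ^ 2 / 8) := lt_of_le_of_lt (h2.trans h1) hsum
  have h4 : (ρ (k + 1) - Fmap σ a (ρ k)) ^ 2 / 8 < ε ^ 2 / 8 :=
    (ENNReal.ofReal_lt_ofReal_iff (by positivity)).mp h3
  nlinarith [sq_abs (ρ (k + 1) - Fmap σ a (ρ k)), abs_nonneg (ρ (k + 1) - Fmap σ a (ρ k))]

include hσ in
lemma path_stays {s : ℝ} {l : ℕ} {ρ : ℕ → ℝ} {m₀ η : ℝ} (h0 : ρ 0 = s)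
    (hm0 : 0 ≤ m₀) (hm0s : m₀ ≤ s) (hη : η ≤ Fmap σ a m₀ - m₀)
    (hstep : ∀ k < l, |ρ (k + 1) - Fmap σ a (ρ k)| < η) :
    ∀ k ≤ l, m₀ ≤ ρ k := by
  intro k
  induction k with
  | zero => intro _; rw [h0]; exact hm0s
  | succ k ih =>
    intro hk1
    have hk : k < l := Nat.lt_of_succ_le hk1
    have ihk := ih hk.le
    have h1 := (abs_lt.mp (hstep k hk)).1
    have h2 : Fmap σ a m₀ ≤ Fmap σ a (ρ k) := Fmap_mono hσ hm0 ihk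
    linarith

include hσ ha hcrit in
lemma Vcost_ne_zero {s t : ℝ} (hs : 0 < s) (hs1 : s ≤ 1) (ht0 : 0 ≤ t) (ht1 : t ≤ 1)
    (hne1 : ∀ l, 1 ≤ l → t ≠ (Fmap σ a)^[l] s) (hne2 : t ≠ rhostar σ a) :
    Vcost σ a s t ≠ 0 := by
  have hρ0 := rhostar_pos hσ hcrit
  have hρ1 := rhostar_lt_one hσ ha
  set m₀ := min s (rhostar σ a) / 2 with hm₀def
  have hm0 : 0 < m₀ := by
    rw [hm₀def]
    have := lt_min hs hρ0
    linarith
  have hm0s : m₀ ≤ s := by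
    rw [hm₀def]
    have := min_le_left s (rhostar σ a)
    linarith
  have hm0ρ : m₀ < rhostar σ a := by
    rw [hm₀def]
    have := min_le_right s (rhostar σ a)
    linarith
  set Fm := Fmap σ a m₀ with hFmdef
  have hFm : 0 < Fm := Fmap_pos hσ hm0
  have hδ0 : 0 < Fm - m₀ := sub_pos.mpr (Fmap_gt_self hσ hcrit hm0 hm0ρ)
  set c := Real.exp a / σ with hcdef
  have hc0 : 0 < c := div_pos (Real.exp_pos a) (by linarith)
  have hc1 : c < 1 := by
    rw [hcdef, div_lt_one (by linarith)]
    exact exp_lt_sigma hσ hcrit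
  rcases eq_or_lt_of_le ht0 with htz | htpos
  · -- t = 0 : any cheap path stays above m₀, contradiction
    intro hV
    have hlt : Vcost σ a s t < ENNReal.ofReal ((Fm - m₀) ^ 2 / 8) := by
      rw [hV]
      exact ENNReal.ofReal_pos.mpr (div_pos (pow_pos hδ0 2) (by norm_num))
    obtain ⟨l, hl, ρ, γ, h0, hL, hρmem, hγmem, hsum⟩ := exists_path_of_lt (σ := σ) (a := a) hlt
    have hstep := step_est hσ ha hδ0 hρmem hγmem hsum
    have hstay := path_stays hσ h0 hm0.le hm0s (le_refl (Fmap σ a m₀ - m₀)) hstep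
    have := hstay l le_rfl
    rw [hL, ← htz] at this
    linarith
  · -- t > 0
    obtain ⟨δ, hδpos, hδ⟩ := gap_pos hσ ha hcrit hs hs1 htpos hne1 hne2
    set η := min (Fm - m₀) (δ * (1 - c) * m₀ * Fm / 2) with hηdef
    have hprod : 0 < δ * (1 - c) * m₀ * Fm / 2 := by
      have := mul_pos (mul_pos (mul_pos hδpos (by linarith : (0:ℝ) < 1 - c)) hm0) hFm
      linarith
    have hη0 : 0 < η := lt_min hδ0 hprod
    have hηδ0 : η ≤ Fm - m₀ := min_le_left _ _
    have hηB : η ≤ δ * (1 - c) * m₀ * Fm / 2 := min_le_right _ _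
    intro hV
    have hlt : Vcost σ a s t < ENNReal.ofReal (η ^ 2 / 8) := by
      rw [hV]
      exact ENNReal.ofReal_pos.mpr (div_pos (pow_pos hη0 2) (by norm_num))
    obtain ⟨l, hl, ρ, γ, h0, hL, hρmem, hγmem, hsum⟩ := exists_path_of_lt (σ := σ) (a := a) hlt
    have hstep := step_est hσ ha hη0 hρmem hγmem hsum
    have hstay := path_stays hσ h0 hm0.le hm0s hηδ0 hstep
    set B := η / ((1 - c) * m₀ * Fm) with hBdef
    have hden : 0 < (1 - c) * m₀ * Fm :=
      mul_pos (mul_pos (by linarith : (0:ℝ) < 1 - c) hm0) hFm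
    have hB0 : 0 ≤ B := le_of_lt (div_pos hη0 hden)
    have hclaim3 : ∀ k ≤ l, |1 / ρ k - 1 / (Fmap σ a)^[k] s| ≤ B := by
      intro k
      induction k with
      | zero =>
        intro _
        rw [h0, Function.iterate_zero_apply, sub_self, abs_zero]
        exact hB0
      | succ k ih =>
        intro hk1
        have hk : k < l := Nat.lt_of_succ_le hk1
        have ihk := ih hk.le
        have hρk : m₀ ≤ ρ k := hstay k hk.le
        have hρk1 : m₀ ≤ ρ (k + 1) := hstay (k + 1) hk1
        have hρk0 : 0 < ρ k := lt_of_lt_of_le hm0 hρk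
        have hρk10 : 0 < ρ (k + 1) := lt_of_lt_of_le hm0 hρk1
        have hFs : 0 < (Fmap σ a)^[k] s := (iter_mem hσ ha hs hs1 k).1
        have hFρk : Fm ≤ Fmap σ a (ρ k) := Fmap_mono hσ hm0.le hρk
        have hFρk0 : 0 < Fmap σ a (ρ k) := lt_of_lt_of_le hFm hFρk
        have key : 1 / ρ (k + 1) - 1 / (Fmap σ a)^[k + 1] s =
            (1 / ρ (k + 1) - 1 / Fmap σ a (ρ k)) +
              c * (1 / ρ k - 1 / (Fmap σ a)^[k] s) := by
          rw [Function.iterate_succ_apply', hcdef, ← one_div_Fmap_sub hσ hρk0 hFs]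
          ring
        have hd : |1 / ρ (k + 1) - 1 / Fmap σ a (ρ k)| ≤ η / (m₀ * Fm) := by
          have e : 1 / ρ (k + 1) - 1 / Fmap σ a (ρ k) =
              (Fmap σ a (ρ k) - ρ (k + 1)) / (ρ (k + 1) * Fmap σ a (ρ k)) := by
            field_simp
          rw [e, abs_div, abs_of_pos (mul_pos hρk10 hFρk0)]
          refine div_le_div₀ hη0.le ?_ (mul_pos hm0 hFm) ?_
          · rw [abs_sub_comm]
            exact (hstep k hk).le
          · exact mul_le_mul hρk1 hFρk hFm.le (by linarith)
        calc |1 / ρ (k + 1) - 1 / (Fmap σ a)^[k + 1] s|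
            ≤ |1 / ρ (k + 1) - 1 / Fmap σ a (ρ k)| +
              |c * (1 / ρ k - 1 / (Fmap σ a)^[k] s)| := by
              rw [key]; exact abs_add_le _ _
          _ ≤ η / (m₀ * Fm) + c * B := by
              refine add_le_add hd ?_
              rw [abs_mul, abs_of_pos hc0]
              exact mul_le_mul_of_nonneg_left ihk hc0.le
          _ = B := by
              rw [hBdef]
              have : (1:ℝ) - c ≠ 0 := by linarith
              field_simp
              ring
    have hfin := hclaim3 l le_rfl
    rw [hL] at hfin
    have hgap := hδ l hl
    have hBδ : B ≤ δ / 2 := by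
      rw [hBdef, div_le_div_iff₀ hden (by norm_num : (0:ℝ) < 2)]
      nlinarith
    linarith

end vcost

/-- Characterization of the zeros of the cost function `V`: assuming
`σe^{−a} > 1`, for `s, t ∈ [0,1]`, `V(s,t) = 0` iff `s = t = 0`, or `t` is an
iterate `F^l(s)` with `l ≥ 1`, or `s ≠ 0` and `t = ρ* = (σe^{−a}−1)/(σ−1)`. -/
theorem Vcost_eq_zero_iff (σ a : ℝ) (hσ : 1 < σ) (ha : 0 < a)
    (hcrit : 1 < σ * Real.exp (-a))
    (s t : ℝ) (hs : s ∈ Set.Icc (0 : ℝ) 1) (ht : t ∈ Set.Icc (0 : ℝ) 1) :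
    Vcost σ a s t = 0 ↔
      (s = 0 ∧ t = 0) ∨
      (∃ l : ℕ, 1 ≤ l ∧ t = (Fmap σ a)^[l] s) ∨
      (s ≠ 0 ∧ t = (σ * Real.exp (-a) - 1) / (σ - 1)) := by
  constructor
  · intro hV
    by_cases hs0 : s = 0
    · subst hs0
      exact Or.inl ⟨rfl, Vcost_zero_left_eq_zero hσ hV⟩
    · have hs' : 0 < s := lt_of_le_of_ne hs.1 (Ne.symm hs0)
      rcases em (∃ l : ℕ, 1 ≤ l ∧ t = (Fmap σ a)^[l] s) with h | h
      · exact Or.inr (Or.inl h)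
      · rcases em (t = rhostar σ a) with h2 | h2
        · exact Or.inr (Or.inr ⟨hs0, h2.trans rfl⟩)
        · exact absurd hV (Vcost_ne_zero hσ ha hcrit hs' hs.2 ht.1 ht.2
            (fun l hl heq => h ⟨l, hl, heq⟩) h2)
  · rintro (⟨hs0, ht0⟩ | ⟨l, hl, rfl⟩ | ⟨hs0, ht'⟩)
    · subst hs0; subst ht0
      have hF0 : (Fmap σ a)^[1] (0:ℝ) = 0 := by simp [Fmap, fsel]
      have h := Vcost_iterate_zero hσ ha (le_refl (0:ℝ)) zero_le_one (l := 1) le_rfl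
      rwa [hF0] at h
    · exact Vcost_iterate_zero hσ ha hs.1 hs.2 hl
    · have hs' : 0 < s := lt_of_le_of_ne hs.1 (Ne.symm hs0)
      rw [ht', show (σ * Real.exp (-a) - 1) / (σ - 1) = rhostar σ a from rfl]
      exact Vcost_rho_zero hσ ha hcrit hs' hs.2
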